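/- arXiv:1011.3740 — 4 statements merged into one kernel-verified Lean document; each statement's English description precedes it below -/
import Mathlib

section
/- Let Λ and Γ be finite dimensional algebras, with Λ separably dividing Γ through bimodules X and Y. If M is a finitely generated Γ-module which is a generator of mod Γ, then the Λ-module X ⊗_Γ M is a generator of mod Λ. -/
noncomputable section


/-- Projective dimension of `M` is at most `d`. -/
def PdLE (R : Type) [Ring R] : ℕ → (M : Type) → (i1 : AddCommGroup M) →
    (@Module R M _ i1.toAddCommMonoid) → Prop
  | 0, M, i1, i2 => letI := i1; letI := i2; Module.Projective R M
  | (d+1), M, i1, i2 =>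
      letI := i1; letI := i2;
      ∃ (P : Type) (iP1 : AddCommGroup P) (iP2 : Module R P)
        (K : Type) (iK1 : AddCommGroup K) (iK2 : Module R K),
        letI := iP1; letI := iP2; letI := iK1; letI := iK2;
        Module.Projective R P ∧
        ∃ (ι : K →ₗ[R] P) (π : P →ₗ[R] M),
          Function.Injective ι ∧ Function.Surjective π ∧
          LinearMap.range ι = LinearMap.ker π ∧ PdLE R d K iK1 iK2

/-- The global dimension of `R` is at most `d`. -/
def GldimLE (R : Type) [Ring R] (d : ℕ) : Prop :=
  ∀ (M : Type) (i1 : AddCommGroup M) (i2 : @Module R M _ i1.toAddCommMonoid),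
    PdLE R d M i1 i2

/-- The global dimension of `R`, as an element of `ℕ∞`. -/
def globalDim (R : Type) [Ring R] : ℕ∞ :=
  sInf {n : ℕ∞ | ∃ d : ℕ, n = d ∧ GldimLE R d}

/-- `N` belongs to `add M`: it is a direct summand of a finite direct sum of copies of `M`. -/
def InAdd (R : Type) [Ring R] (M : Type) [AddCommGroup M] [Module R M]
    (N : Type) [AddCommGroup N] [Module R N] : Prop :=
  ∃ (t : ℕ) (ι : N →ₗ[R] (Fin t → M)) (π : (Fin t → M) →ₗ[R] N), π.comp ι = LinearMap.id

/-- `M` is a generator for the module category of `R`. -/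
def IsGenerator (R : Type) [Ring R] (M : Type) [AddCommGroup M] [Module R M] : Prop :=
  InAdd R M R

/-- `M` is a cogenerator: every finitely generated injective module is in `add M`. -/
def IsCogenerator (R : Type) [Ring R] (M : Type) [AddCommGroup M] [Module R M] : Prop :=
  ∀ (I : Type) (i1 : AddCommGroup I) (i2 : Module R I),
    letI := i1; letI := i2;
    Module.Finite R I → Module.Injective R I → InAdd R M I

/-- The representation dimension of `R`. -/
def RepDim (R : Type) [Ring R] : ℕ∞ :=
  sInf {n : ℕ∞ | ∃ (M : Type) (i1 : AddCommGroup M) (i2 : Module R M),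
    letI := i1; letI := i2;
    Module.Finite R M ∧ IsGenerator R M ∧ IsCogenerator R M ∧
      n = globalDim (Module.End R M)}



section Bimod

variable (Λ Γ : Type) [Ring Λ] [Ring Γ]

/-- Right multiplication by `g : Γ` on a `Λ`-`Γ`-bimodule `X`, as a `Λ`-linear map. -/
def rmulHom (X : Type) [AddCommGroup X] [Module Λ X] [Module Γᵐᵒᵖ X]
    [SMulCommClass Λ Γᵐᵒᵖ X] (g : Γ) : X →ₗ[Λ] X where
  toFun x := (MulOpposite.op g) • x
  map_add' a b := smul_add _ a b
  map_smul' a x := (smul_comm a (MulOpposite.op g) x).symm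

/-- The left `Γ`-module structure on `Hom_Λ(X, J)`, where `X` is a `Λ`-`Γ`-bimodule and `J`
a `Λ`-module: `(g • h) x = h (x • g)`. -/
def homModule (X : Type) [AddCommGroup X] [Module Λ X] [Module Γᵐᵒᵖ X]
    [SMulCommClass Λ Γᵐᵒᵖ X] (J : Type) [AddCommGroup J] [Module Λ J] :
    Module Γ (X →ₗ[Λ] J) where
  smul g h := h.comp (rmulHom Λ Γ X g)
  one_smul h := by
    ext x
    show h ((MulOpposite.op (1 : Γ)) • x) = h x
    simp
  mul_smul g₁ g₂ h := by
    ext x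
    show h ((MulOpposite.op (g₁ * g₂)) • x) =
      h ((MulOpposite.op g₂) • (MulOpposite.op g₁) • x)
    rw [MulOpposite.op_mul, mul_smul]
  smul_zero g := by
    ext x
    rfl
  smul_add g h₁ h₂ := by
    ext x
    rfl
  add_smul g₁ g₂ h := by
    ext x
    show h ((MulOpposite.op (g₁ + g₂)) • x) =
      h ((MulOpposite.op g₁) • x) + h ((MulOpposite.op g₂) • x)
    rw [MulOpposite.op_add, add_smul, map_add]
  zero_smul h := by
    ext x
    show h ((MulOpposite.op (0 : Γ)) • x) = 0
    simp

/-- `(T, β)` is the tensor product `X ⊗_Γ Y` of the `Λ`-`Γ`-bimodule `X` and the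
`Γ`-`Λ`-bimodule `Y`, as a `Λ`-`Λ`-bimodule, characterized by its universal property. -/
def IsBimodTensor
    (X : Type) [AddCommGroup X] [Module Λ X] [Module Γᵐᵒᵖ X] [SMulCommClass Λ Γᵐᵒᵖ X]
    (Y : Type) [AddCommGroup Y] [Module Γ Y] [Module Λᵐᵒᵖ Y] [SMulCommClass Γ Λᵐᵒᵖ Y]
    (T : Type) [AddCommGroup T] [Module Λ T] [Module Λᵐᵒᵖ T] [SMulCommClass Λ Λᵐᵒᵖ T]
    (β : X → Y → T) : Prop :=
  (∀ x₁ x₂ y, β (x₁ + x₂) y = β x₁ y + β x₂ y) ∧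
  (∀ x y₁ y₂, β x (y₁ + y₂) = β x y₁ + β x y₂) ∧
  (∀ (a : Λ) x y, β (a • x) y = a • β x y) ∧
  (∀ (a : Λᵐᵒᵖ) x y, β x (a • y) = a • β x y) ∧
  (∀ (g : Γ) x y, β ((MulOpposite.op g) • x) y = β x (g • y)) ∧
  (∀ (W : Type) (i1 : AddCommGroup W) (i2 : Module Λ W) (i3 : Module Λᵐᵒᵖ W)
      (i4 : SMulCommClass Λ Λᵐᵒᵖ W),
    ∀ b : X → Y → W,
      (∀ x₁ x₂ y, b (x₁ + x₂) y = b x₁ y + b x₂ y) →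
      (∀ x y₁ y₂, b x (y₁ + y₂) = b x y₁ + b x y₂) →
      (∀ (a : Λ) x y, b (a • x) y = a • b x y) →
      (∀ (a : Λᵐᵒᵖ) x y, b x (a • y) = a • b x y) →
      (∀ (g : Γ) x y, b ((MulOpposite.op g) • x) y = b x (g • y)) →
      ∃! h : T → W,
        (∀ t₁ t₂, h (t₁ + t₂) = h t₁ + h t₂) ∧
        (∀ (a : Λ) t, h (a • t) = a • h t) ∧
        (∀ (a : Λᵐᵒᵖ) t, h (a • t) = a • h t) ∧
        (∀ x y, h (β x y) = b x y))

/-- `Λ` is a direct summand of the `Λ`-`Λ`-bimodule `T`. -/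
def IsBimodSummand (T : Type) [AddCommGroup T] [Module Λ T] [Module Λᵐᵒᵖ T]
    [SMulCommClass Λ Λᵐᵒᵖ T] : Prop :=
  ∃ (i : Λ → T) (p : T → Λ),
    (∀ a b : Λ, i (a + b) = i a + i b) ∧ (∀ (a : Λ) (c : Λ), i (a * c) = a • i c) ∧
    (∀ (a : Λ) (c : Λ), i (c * a) = (MulOpposite.op a) • i c) ∧
    (∀ t₁ t₂, p (t₁ + t₂) = p t₁ + p t₂) ∧ (∀ (a : Λ) t, p (a • t) = a * p t) ∧
    (∀ (a : Λ) t, p ((MulOpposite.op a) • t) = p t * a) ∧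
    (∀ a : Λ, p (i a) = a)

/-- `(J, γ)` is the induced `Λ`-module `X ⊗_Γ M`, characterized by its universal
property. -/
def IsInducedModule
    (X : Type) [AddCommGroup X] [Module Λ X] [Module Γᵐᵒᵖ X] [SMulCommClass Λ Γᵐᵒᵖ X]
    (M : Type) [AddCommGroup M] [Module Γ M]
    (J : Type) [AddCommGroup J] [Module Λ J] (γ : X → M → J) : Prop :=
  (∀ x₁ x₂ m, γ (x₁ + x₂) m = γ x₁ m + γ x₂ m) ∧
  (∀ x m₁ m₂, γ x (m₁ + m₂) = γ x m₁ + γ x m₂) ∧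
  (∀ (a : Λ) x m, γ (a • x) m = a • γ x m) ∧
  (∀ (g : Γ) x m, γ ((MulOpposite.op g) • x) m = γ x (g • m)) ∧
  (∀ (W : Type) (i1 : AddCommGroup W) (i2 : Module Λ W),
    ∀ b : X → M → W,
      (∀ x₁ x₂ m, b (x₁ + x₂) m = b x₁ m + b x₂ m) →
      (∀ x m₁ m₂, b x (m₁ + m₂) = b x m₁ + b x m₂) →
      (∀ (a : Λ) x m, b (a • x) m = a • b x m) →
      (∀ (g : Γ) x m, b ((MulOpposite.op g) • x) m = b x (g • m)) →
      ∃! h : J →ₗ[Λ] W, ∀ x m, h (γ x m) = b x m)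

end Bimod

section Aux

variable (Λ Γ : Type) [Ring Λ] [Ring Γ]
variable (X : Type) [AddCommGroup X] [Module Λ X] [Module Γᵐᵒᵖ X] [SMulCommClass Λ Γᵐᵒᵖ X]
variable (Y : Type) [AddCommGroup Y] [Module Γ Y] [Module Λᵐᵒᵖ Y] [SMulCommClass Γ Λᵐᵒᵖ Y]
variable (T : Type) [AddCommGroup T] [Module Λ T] [Module Λᵐᵒᵖ T] [SMulCommClass Λ Λᵐᵒᵖ T]

/-- Every element of a bimodule tensor product is a finite sum of pure tensors. -/
theorem bimod_tensor_span (β : X → Y → T) (hT : IsBimodTensor Λ Γ X Y T β) (t : T) :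
    ∃ (n : ℕ) (xs : Fin n → X) (ys : Fin n → Y), t = ∑ l, β (xs l) (ys l) := by
  obtain ⟨hb1, hb2, hbl, hbr, hbbal, huniv⟩ := hT
  set D : Submodule Λ T :=
    { carrier := {t : T | ∃ (n : ℕ) (xs : Fin n → X) (ys : Fin n → Y),
        t = ∑ l, β (xs l) (ys l)}
      zero_mem' := ⟨0, Fin.elim0, Fin.elim0, by simp⟩
      add_mem' := by
        rintro a b ⟨n, xs, ys, rfl⟩ ⟨n', xs', ys', rfl⟩
        refine ⟨n + n', Fin.append xs xs', Fin.append ys ys', ?_⟩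
        rw [Fin.sum_univ_add]
        simp
      smul_mem' := by
        rintro a t ⟨n, xs, ys, rfl⟩
        refine ⟨n, fun l => a • xs l, ys, ?_⟩
        rw [Finset.smul_sum]
        simp [hbl] } with hD
  have hmemD : ∀ (n : ℕ) (xs : Fin n → X) (ys : Fin n → Y),
      (∑ l, β (xs l) (ys l)) ∈ D := fun n xs ys => ⟨n, xs, ys, rfl⟩
  have hop : ∀ (a : Λᵐᵒᵖ) (t : T), t ∈ D → a • t ∈ D := by
    rintro a t ⟨n, xs, ys, rfl⟩
    refine ⟨n, xs, fun l => a • ys l, ?_⟩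
    rw [Finset.smul_sum]
    simp [hbr]
  let opMap : Λᵐᵒᵖ → T →ₗ[Λ] T := fun a =>
    { toFun := fun x => a • x
      map_add' := fun x y => smul_add a x y
      map_smul' := fun c x => (smul_comm c a x).symm }
  letI instMop : Module Λᵐᵒᵖ (T ⧸ D) :=
    { smul := fun a q => Submodule.mapQ D D (opMap a) (fun t ht => hop a t ht) q
      one_smul := fun q => by
        obtain ⟨x, rfl⟩ := Submodule.Quotient.mk_surjective D q
        show Submodule.mapQ D D (opMap 1) _ (Submodule.Quotient.mk x) = _
        rw [Submodule.mapQ_apply]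
        simp [opMap]
      mul_smul := fun a b q => by
        obtain ⟨x, rfl⟩ := Submodule.Quotient.mk_surjective D q
        show Submodule.mapQ D D (opMap (a * b)) _ (Submodule.Quotient.mk x)
          = Submodule.mapQ D D (opMap a) _
              (Submodule.mapQ D D (opMap b) _ (Submodule.Quotient.mk x))
        rw [Submodule.mapQ_apply, Submodule.mapQ_apply, Submodule.mapQ_apply]
        simp [opMap, mul_smul]
      smul_zero := fun a => map_zero (Submodule.mapQ D D (opMap a) (fun t ht => hop a t ht))
      smul_add := fun a q r =>
        map_add (Submodule.mapQ D D (opMap a) (fun t ht => hop a t ht)) q r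
      add_smul := fun a b q => by
        obtain ⟨x, rfl⟩ := Submodule.Quotient.mk_surjective D q
        show Submodule.mapQ D D (opMap (a + b)) _ (Submodule.Quotient.mk x)
          = Submodule.mapQ D D (opMap a) _ (Submodule.Quotient.mk x)
            + Submodule.mapQ D D (opMap b) _ (Submodule.Quotient.mk x)
        rw [Submodule.mapQ_apply, Submodule.mapQ_apply, Submodule.mapQ_apply,
          ← Submodule.Quotient.mk_add]
        simp [opMap, add_smul]
      zero_smul := fun q => by
        obtain ⟨x, rfl⟩ := Submodule.Quotient.mk_surjective D q
        show Submodule.mapQ D D (opMap 0) _ (Submodule.Quotient.mk x) = 0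
        rw [Submodule.mapQ_apply]
        simp [opMap] }
  have hmk : ∀ (a : Λᵐᵒᵖ) (x : T),
      a • (Submodule.Quotient.mk x : T ⧸ D) = Submodule.Quotient.mk (a • x) := by
    intro a x
    show Submodule.mapQ D D (opMap a) _ (Submodule.Quotient.mk x) = _
    rw [Submodule.mapQ_apply]
    rfl
  letI instSC : SMulCommClass Λ Λᵐᵒᵖ (T ⧸ D) := by
    constructor
    intro c a q
    obtain ⟨x, rfl⟩ := Submodule.Quotient.mk_surjective D q
    rw [hmk, ← Submodule.Quotient.mk_smul, ← Submodule.Quotient.mk_smul, hmk]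
    rw [smul_comm c a x]
  obtain ⟨h, _, huq⟩ := huniv (T ⧸ D) inferInstance inferInstance instMop instSC
    (fun _ _ => (0 : T ⧸ D)) (by simp) (by simp) (by simp) (by simp) (by simp)
  have h1 : (fun _ : T => (0 : T ⧸ D)) = h :=
    huq _ ⟨by simp, by simp, by simp, fun _ _ => rfl⟩
  have h2 : (fun t : T => (Submodule.Quotient.mk t : T ⧸ D)) = h := by
    refine huq _ ⟨fun t₁ t₂ => Submodule.Quotient.mk_add D,
      fun a t => Submodule.Quotient.mk_smul D a t, fun a t => (hmk a t).symm, ?_⟩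
    intro x y
    rw [Submodule.Quotient.mk_eq_zero]
    exact ⟨1, fun _ => x, fun _ => y, by simp⟩
  have : (Submodule.Quotient.mk t : T ⧸ D) = 0 := by
    rw [show (Submodule.Quotient.mk t : T ⧸ D) = h t from congrFun h2 t]
    exact (congrFun h1 t).symm
  rw [Submodule.Quotient.mk_eq_zero] at this
  exact this

end Aux

/-- Proposition 2.4: if the finite dimensional algebra `Λ` separably divides `Γ` through
bimodules `X` and `Y`, and `M` is a finitely generated generator of `mod Γ`, then the
`Λ`-module `X ⊗_Γ M` is a generator of `mod Λ`. -/
theorem stmt_3 (k Λ Γ : Type) [Field k]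
    [Ring Λ] [Algebra k Λ] [FiniteDimensional k Λ]
    [Ring Γ] [Algebra k Γ] [FiniteDimensional k Γ]
    (X : Type) [AddCommGroup X] [Module Λ X] [Module Γᵐᵒᵖ X] [SMulCommClass Λ Γᵐᵒᵖ X]
    (Y : Type) [AddCommGroup Y] [Module Γ Y] [Module Λᵐᵒᵖ Y] [SMulCommClass Γ Λᵐᵒᵖ Y]
    (hX1 : Module.Projective Λ X) (hX2 : Module.Projective Γᵐᵒᵖ X)
    (hY1 : Module.Projective Γ Y) (hY2 : Module.Projective Λᵐᵒᵖ Y)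
    (T : Type) [AddCommGroup T] [Module Λ T] [Module Λᵐᵒᵖ T] [SMulCommClass Λ Λᵐᵒᵖ T]
    (β : X → Y → T) (hT : IsBimodTensor Λ Γ X Y T β)
    (hsum : IsBimodSummand Λ T)
    (M : Type) [AddCommGroup M] [Module Γ M] [Module.Finite Γ M]
    (hgen : InAdd Γ M Γ)
    (J : Type) [AddCommGroup J] [Module Λ J] (γ : X → M → J)
    (hJ : IsInducedModule Λ Γ X M J γ) :
    InAdd Λ J Λ := by
  classical
  obtain ⟨i, p, hiadd, hil, hir, hpadd, hpl, hpr, hpi⟩ := hsum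
  obtain ⟨n, xs, ys, hrep⟩ := bimod_tensor_span Λ Γ X Y T β hT (i 1)
  obtain ⟨hb1, hb2, hbl, hbr, hbbal, _⟩ := hT
  obtain ⟨hg1, hg2, hgl, hgbal, hguniv⟩ := hJ
  -- the generator data
  obtain ⟨s, ιM, πM, hMid⟩ := hgen
  set m : Fin s → M := fun j => ιM 1 j with hm
  have hsum1 : ∑ j, πM (Pi.single j (m j)) = 1 := by
    have : πM (ιM 1) = 1 := DFunLike.congr_fun hMid 1
    rw [← this]
    rw [← map_sum]
    congr 1
    exact Finset.univ_sum_single (ιM 1)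
  -- the retractions J → X
  have hhex : ∀ j : Fin s, ∃ h : J →ₗ[Λ] X,
      ∀ (x : X) (m' : M), h (γ x m') = (MulOpposite.op (πM (Pi.single j m'))) • x := by
    intro j
    have := hguniv X inferInstance inferInstance
      (fun x m' => (MulOpposite.op (πM (Pi.single j m'))) • x)
      (fun x₁ x₂ m' => smul_add _ x₁ x₂)
      (fun x m₁ m₂ => by
        show (MulOpposite.op (πM (Pi.single j (m₁ + m₂)))) • x = _
        rw [Pi.single_add, map_add, MulOpposite.op_add, add_smul])
      (fun a x m' => by
        show (MulOpposite.op (πM (Pi.single j m'))) • (a • x) = _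
        exact (smul_comm a _ x).symm)
      (fun g x m' => by
        show (MulOpposite.op (πM (Pi.single j m'))) • ((MulOpposite.op g) • x)
          = (MulOpposite.op (πM (Pi.single j (g • m')))) • x
        rw [smul_smul, ← MulOpposite.op_mul]
        have : (Pi.single j (g • m') : Fin s → M) = g • (Pi.single j m' : Fin s → M) :=
          by funext i; by_cases hij : i = j
             · subst hij; simp
             · simp [Pi.single_eq_of_ne hij]
        rw [this, map_smul]
        rfl)
    exact this.exists
  choose h hh using hhex
  -- index set
  let e : Fin (n * s) ≃ Fin n × Fin s := finProdFinEquiv.symm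
  let J0 : Fin (n * s) → J := fun l => γ (xs (e l).1) (m (e l).2)
  -- bundled additive maps for summing
  let P : T →+ Λ := AddMonoidHom.mk' p hpadd
  refine ⟨n * s,
    { toFun := fun a => a • J0
      map_add' := fun a b => add_smul a b J0
      map_smul' := fun a b => mul_smul a b J0 },
    { toFun := fun f => ∑ l, p (β ((h (e l).2) (f l)) (ys (e l).1))
      map_add' := fun f g => by
        rw [← Finset.sum_add_distrib]
        refine Finset.sum_congr rfl fun l _ => ?_
        rw [Pi.add_apply, map_add, hb1, hpadd]
      map_smul' := fun a f => by
        simp only [RingHom.id_apply, smul_eq_mul, Finset.mul_sum]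
        refine Finset.sum_congr rfl fun l _ => ?_
        rw [Pi.smul_apply, map_smul, hbl, hpl] }, ?_⟩
  refine LinearMap.ext fun a => ?_
  simp only [LinearMap.comp_apply, LinearMap.coe_mk, AddHom.coe_mk, LinearMap.id_apply]
  have key : ∑ l, p (β ((h (e l).2) ((a • J0) l)) (ys (e l).1)) = a * ∑ l,
      p (β ((h (e l).2) (J0 l)) (ys (e l).1)) := by
    rw [Finset.mul_sum]
    refine Finset.sum_congr rfl fun l _ => ?_
    rw [Pi.smul_apply, map_smul, hbl, hpl]
  rw [key]
  have hJ0 : ∀ l, (h (e l).2) (J0 l)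
      = (MulOpposite.op (πM (Pi.single (e l).2 (m (e l).2)))) • xs (e l).1 := fun l =>
    hh (e l).2 (xs (e l).1) (m (e l).2)
  have main : ∑ l, p (β ((h (e l).2) (J0 l)) (ys (e l).1)) = 1 := by
    have step1 : ∑ l, p (β ((h (e l).2) (J0 l)) (ys (e l).1))
        = ∑ q : Fin n × Fin s,
            p (β ((MulOpposite.op (πM (Pi.single q.2 (m q.2)))) • xs q.1) (ys q.1)) := by
      rw [← Equiv.sum_comp e
        (fun q : Fin n × Fin s =>
          p (β ((MulOpposite.op (πM (Pi.single q.2 (m q.2)))) • xs q.1) (ys q.1)))]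
      exact Finset.sum_congr rfl fun l _ => by rw [hJ0 l]
    rw [step1, Fintype.sum_prod_type]
    have step2 : ∀ k : Fin n,
        ∑ j : Fin s, p (β ((MulOpposite.op (πM (Pi.single j (m j)))) • xs k) (ys k))
          = p (β (xs k) (ys k)) := by
      intro k
      let B : X →+ Λ := AddMonoidHom.mk' (fun x => p (β x (ys k)))
        (fun x₁ x₂ => by show p (β (x₁ + x₂) (ys k)) = _; rw [hb1, hpadd])
      have : ∀ j : Fin s,
          p (β ((MulOpposite.op (πM (Pi.single j (m j)))) • xs k) (ys k))
            = B ((MulOpposite.op (πM (Pi.single j (m j)))) • xs k) := fun _ => rfl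
      simp only [this]
      rw [← map_sum, ← Finset.sum_smul]
      have : ∑ j : Fin s, MulOpposite.op (πM (Pi.single j (m j)))
          = MulOpposite.op (∑ j : Fin s, πM (Pi.single j (m j))) := by
        simpa using (map_sum (MulOpposite.opAddEquiv (α := Λ)).toAddMonoidHom
          (fun j => πM (Pi.single j (m j))) Finset.univ).symm
      rw [this, hsum1, MulOpposite.op_one, one_smul]
      rfl
    rw [Finset.sum_congr rfl fun k _ => step2 k]
    have : ∑ k : Fin n, p (β (xs k) (ys k)) = p (∑ k : Fin n, β (xs k) (ys k)) :=
      (map_sum P _ _).symm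
    rw [this, ← hrep, hpi]
  rw [main, mul_one]

end
end

section
/- Let Λ be a finite dimensional symmetric algebra and Γ a parabolic subalgebra such that μ(c_Γ^Λ) is invertible in Λ. Then for every i ≥ 0 and all finitely generated Λ-modules M and N, the restriction map Ext^i_Λ(M,N) → Ext^i_Γ(M,N) is injective. -/
noncomputable section


/-- `s` is a symmetrizing form on the finite dimensional `k`-algebra `Λ`: a linear form
which is symmetric (`s(xy) = s(yx)`) and nondegenerate. -/
def IsSymmetrizingForm (k : Type) [Field k] (Λ : Type) [Ring Λ] [Algebra k Λ]
    (s : Λ →ₗ[k] k) : Prop :=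
  (∀ a b : Λ, s (a * b) = s (b * a)) ∧ (∀ a : Λ, a ≠ 0 → ∃ b : Λ, s (a * b) ≠ 0)

/-- `Γ` (embedded into `Λ` by `ι`) is a parabolic subalgebra of the symmetric algebra
`(Λ, s)`: the restriction of `s` to `Γ` is a symmetrizing form for `Γ`, and `Λ` is finitely
generated projective as a `Γ`-module. -/
def IsParabolic (k : Type) [Field k] (Λ : Type) [Ring Λ] [Algebra k Λ]
    (Γ : Type) [Ring Γ] [Algebra k Γ] (s : Λ →ₗ[k] k) (ι : Γ →ₐ[k] Λ) : Prop :=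
  Function.Injective ι ∧
  IsSymmetrizingForm k Γ (s.comp ι.toLinearMap) ∧
  (letI : Module Γ Λ := Module.compHom Λ ι.toRingHom
   Module.Projective Γ Λ ∧ Module.Finite Γ Λ)

/-- The families `x, y` and the projection `pr : Λ → Γ` represent the relative Casimir
element `c_Γ^Λ = Σᵢ xᵢ ⊗ yᵢ ∈ Λ ⊗_Γ Λ`: `pr` is the `Γ`-`Γ`-bimodule projection of `Λ`
onto `Γ` along a complement contained in `Ker s`, and `x, y` form a pair of relative dual
bases with respect to the symmetrizing form. -/
def IsCasimirData (k : Type) [Field k] (Λ : Type) [Ring Λ] [Algebra k Λ]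
    (Γ : Type) [Ring Γ] [Algebra k Γ] (s : Λ →ₗ[k] k) (ι : Γ →ₐ[k] Λ)
    {t : ℕ} (x y : Fin t → Λ) (pr : Λ →ₗ[k] Γ) : Prop :=
  (∀ g : Γ, pr (ι g) = g) ∧
  (∀ (g g' : Γ) (a : Λ), pr (ι g * a * ι g') = g * pr a * g') ∧
  (∀ a : Λ, s (ι (pr a)) = s a) ∧
  (∀ a : Λ, a = ∑ i, x i * ι (pr (y i * a))) ∧
  (∀ a : Λ, a = ∑ i, ι (pr (a * x i)) * y i)

/-- Proposition 3.3: if `Λ` is a finite dimensional symmetric algebra and `Γ` a parabolic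
subalgebra such that `μ(c_Γ^Λ)` is invertible in `Λ`, then for every `i ≥ 0` the restriction
map `Ext^i_Λ(M,N) → Ext^i_Γ(M,N)` is injective for all finitely generated `Λ`-modules
`M, N`.  (Degree `0` is injectivity of restriction on `Hom`; the degrees `i ≥ 1` are
expressed by the equivalent statement, uniformly in all finitely generated modules, that any
extension of `Λ`-modules which splits after restriction to `Γ` is already split over `Λ`.) -/
theorem stmt_6 (k : Type) [Field k] (Λ : Type) [Ring Λ] [Algebra k Λ]
    [FiniteDimensional k Λ] (Γ : Type) [Ring Γ] [Algebra k Γ]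
    (s : Λ →ₗ[k] k) (hs : IsSymmetrizingForm k Λ s)
    (ι : Γ →ₐ[k] Λ) (hpar : IsParabolic k Λ Γ s ι)
    (t : ℕ) (x y : Fin t → Λ) (pr : Λ →ₗ[k] Γ)
    (hc : IsCasimirData k Λ Γ s ι x y pr)
    (hcentral : ∀ a : Λ, a * (∑ i, x i * y i) = (∑ i, x i * y i) * a)
    (hunit : IsUnit (∑ i, x i * y i)) :
    -- degree 0: restriction is injective on homomorphisms
    (∀ (M : Type) (iM1 : AddCommGroup M) (iM2 : Module Λ M)
       (N : Type) (iN1 : AddCommGroup N) (iN2 : Module Λ N),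
      Module.Finite Λ M → Module.Finite Λ N →
      letI : Module Γ M := Module.compHom M ι.toRingHom
      letI : Module Γ N := Module.compHom N ι.toRingHom
      Function.Injective (fun (f : M →ₗ[Λ] N) =>
        ({ toFun := f, map_add' := f.map_add,
           map_smul' := fun (g : Γ) (m : M) => f.map_smul (ι g) m } : M →ₗ[Γ] N))) ∧
    -- degrees `i ≥ 1`: extensions of `Λ`-modules splitting over `Γ` split over `Λ`
    (∀ (M : Type) (iM1 : AddCommGroup M) (iM2 : Module Λ M)
       (N : Type) (iN1 : AddCommGroup N) (iN2 : Module Λ N)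
       (E : Type) (iE1 : AddCommGroup E) (iE2 : Module Λ E),
      Module.Finite Λ M → Module.Finite Λ N → Module.Finite Λ E →
      ∀ (u : N →ₗ[Λ] E) (v : E →ₗ[Λ] M),
        Function.Injective u → Function.Surjective v →
        LinearMap.range u = LinearMap.ker v →
        (letI : Module Γ E := Module.compHom E ι.toRingHom
         letI : Module Γ N := Module.compHom N ι.toRingHom
         ∃ r : E →ₗ[Γ] N, ∀ z : N, r (u z) = z) →
        (∃ r : E →ₗ[Λ] N, ∀ z : N, r (u z) = z)) := by
  obtain ⟨hpr1, hpr2, hpr3, hx, hy⟩ := hc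
  obtain ⟨zu, hzu⟩ := hunit
  constructor
  · intro M _ _ N _ _ _ _ f g h
    ext m
    exact congrArg (fun φ => φ m) h
  · intro M _ _ N _ _ E _ _ _ _ _ u v hu hv hrange hsplit
    letI : Module Γ E := Module.compHom E ι.toRingHom
    letI : Module Γ N := Module.compHom N ι.toRingHom
    obtain ⟨r, hr⟩ := hsplit
    -- key commutation: z⁻¹ commutes with everything
    have hzinv : ∀ a : Λ, (↑zu⁻¹ : Λ) * a = a * ↑zu⁻¹ := by
      intro a
      have h := hcentral a
      rw [← hzu] at h
      calc (↑zu⁻¹ : Λ) * a = ↑zu⁻¹ * (a * ↑zu * ↑zu⁻¹) := by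
            rw [mul_assoc, Units.mul_inv, mul_one]
        _ = ↑zu⁻¹ * ↑zu * (a * ↑zu⁻¹) := by rw [h]; simp only [mul_assoc]
        _ = a * ↑zu⁻¹ := by rw [Units.inv_mul, one_mul]
    -- Γ-linearity of r, rewritten through ι
    have hrg : ∀ (g : Γ) (e : E), r (ι g • e) = ι g • r e := fun g e => r.map_smul g e
    -- the relative trace of r is Λ-linear
    have key : ∀ (a : Λ) (e : E),
        (∑ i, x i • r (y i • (a • e))) = a • ∑ i, x i • r (y i • e) := by
      intro a e
      have step1 : ∀ i, r (y i • (a • e)) =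
          ∑ j, ι (pr (y i * a * x j)) • r (y j • e) := by
        intro i
        have hexp : y i * a = ∑ j, ι (pr (y i * a * x j)) * y j := hy (y i * a)
        calc r (y i • (a • e)) = r ((y i * a) • e) := by rw [smul_smul]
          _ = r ((∑ j, ι (pr (y i * a * x j)) * y j) • e) := by rw [← hexp]
          _ = r (∑ j, ι (pr (y i * a * x j)) • (y j • e)) := by
              rw [Finset.sum_smul]; simp only [mul_smul]
          _ = ∑ j, ι (pr (y i * a * x j)) • r (y j • e) := by
              rw [map_sum]; exact Finset.sum_congr rfl fun j _ => hrg _ _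
      calc (∑ i, x i • r (y i • (a • e)))
          = ∑ i, ∑ j, (x i * ι (pr (y i * a * x j))) • r (y j • e) := by
            refine Finset.sum_congr rfl fun i _ => ?_
            rw [step1 i, Finset.smul_sum]
            simp only [smul_smul]
        _ = ∑ j, (∑ i, x i * ι (pr (y i * (a * x j)))) • r (y j • e) := by
            rw [Finset.sum_comm]
            refine Finset.sum_congr rfl fun j _ => ?_
            rw [Finset.sum_smul]
            simp only [mul_assoc]
        _ = ∑ j, (a * x j) • r (y j • e) := by
            refine Finset.sum_congr rfl fun j _ => ?_
            rw [← hx (a * x j)]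
        _ = a • ∑ j, x j • r (y j • e) := by
            rw [Finset.smul_sum]
            simp only [mul_smul]
    refine ⟨{ toFun := fun e => (↑zu⁻¹ : Λ) • ∑ i, x i • r (y i • e)
              map_add' := ?_
              map_smul' := ?_ }, ?_⟩
    · intro e e'
      simp only [smul_add, map_add, Finset.sum_add_distrib]
    · intro a e
      simp only [RingHom.id_apply]
      rw [key a e, smul_smul, hzinv a, ← smul_smul]
    · intro n
      have h1 : ∀ i, r (y i • u n) = y i • n := by
        intro i
        rw [← u.map_smul, hr]
      simp only [LinearMap.coe_mk, AddHom.coe_mk]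
      calc (↑zu⁻¹ : Λ) • ∑ i, x i • r (y i • u n)
          = (↑zu⁻¹ : Λ) • ∑ i, (x i * y i) • n := by
            refine congrArg _ (Finset.sum_congr rfl fun i _ => ?_)
            rw [h1 i, smul_smul]
        _ = (↑zu⁻¹ : Λ) • (∑ i, x i * y i) • n := by rw [Finset.sum_smul]
        _ = n := by rw [← hzu, smul_smul, Units.inv_mul, one_smul]

end
end

section
/- Let Λ ⊇ Γ ⊇ Δ be a parabolic chain of finite dimensional symmetric algebras (Γ parabolic in Λ, Δ parabolic in Γ). Then Δ is a parabolic subalgebra of Λ, and the relative trace maps satisfy tr_Γ^Λ ∘ tr_Δ^Γ = tr_Δ^Λ on Hom_Δ(M,N) for all Λ-modules M, N. -/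
noncomputable section


/-- Lemma 3.2: for a parabolic chain `Λ ⊇ Γ ⊇ Δ` of finite dimensional symmetric algebras,
`Δ` is a parabolic subalgebra of `Λ`, and the relative trace maps (defined via the relative
Casimir elements) satisfy `tr_Γ^Λ ∘ tr_Δ^Γ = tr_Δ^Λ` on `Hom_Δ(M,N)` for all `Λ`-modules
`M, N`. -/
theorem stmt_7 (k : Type) [Field k] (Λ : Type) [Ring Λ] [Algebra k Λ]
    [FiniteDimensional k Λ] (Γ : Type) [Ring Γ] [Algebra k Γ] [FiniteDimensional k Γ]
    (Δ : Type) [Ring Δ] [Algebra k Δ] [FiniteDimensional k Δ]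
    (s : Λ →ₗ[k] k) (hs : IsSymmetrizingForm k Λ s)
    (ιΓ : Γ →ₐ[k] Λ) (hparΓ : IsParabolic k Λ Γ s ιΓ)
    (ιΔ : Δ →ₐ[k] Γ) (hparΔ : IsParabolic k Γ Δ (s.comp ιΓ.toLinearMap) ιΔ)
    -- the relative Casimir element of `Γ ⊆ Λ`
    (t₁ : ℕ) (x y : Fin t₁ → Λ) (prΛΓ : Λ →ₗ[k] Γ)
    (hc₁ : IsCasimirData k Λ Γ s ιΓ x y prΛΓ)
    -- the relative Casimir element of `Δ ⊆ Γ`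
    (t₂ : ℕ) (u v : Fin t₂ → Γ) (prΓΔ : Γ →ₗ[k] Δ)
    (hc₂ : IsCasimirData k Γ Δ (s.comp ιΓ.toLinearMap) ιΔ u v prΓΔ)
    -- the relative Casimir element of `Δ ⊆ Λ`
    (t₃ : ℕ) (a b : Fin t₃ → Λ) (prΛΔ : Λ →ₗ[k] Δ)
    (hc₃ : IsCasimirData k Λ Δ s (ιΓ.comp ιΔ) a b prΛΔ) :
    -- `Δ` is a parabolic subalgebra of `Λ`
    IsParabolic k Λ Δ s (ιΓ.comp ιΔ) ∧
    -- transitivity of the relative trace maps, on `Δ`-linear maps between `Λ`-modules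
    (∀ (M : Type) (iM1 : AddCommGroup M) (iM2 : Module Λ M)
       (N : Type) (iN1 : AddCommGroup N) (iN2 : Module Λ N),
      ∀ f : M → N,
        (∀ m m' : M, f (m + m') = f m + f m') →
        (∀ (d : Δ) (m : M), f ((ιΓ.comp ιΔ) d • m) = (ιΓ.comp ιΔ) d • f m) →
        ∀ m : M,
          ∑ i, x i • (∑ j, ιΓ (u j) • f (ιΓ (v j) • (y i • m))) =
            ∑ l, a l • f (b l • m)) := by
  obtain ⟨h1a, h1b, h1c, h1d, h1e⟩ := hc₁
  obtain ⟨h2a, h2b, h2c, h2d, h2e⟩ := hc₂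
  obtain ⟨h3a, h3b, h3c, h3d, h3e⟩ := hc₃
  -- normalized versions of the `hc₃` data
  have h3b' : ∀ (g g' : Δ) (z : Λ),
      prΛΔ (ιΓ (ιΔ g) * z * ιΓ (ιΔ g')) = g * prΛΔ z * g' := by
    intro g g' z; simpa using h3b g g' z
  have h3c' : ∀ z : Λ, s (ιΓ (ιΔ (prΛΔ z))) = s z := by
    intro z; simpa using h3c z
  have h3e' : ∀ z : Λ, z = ∑ l, ιΓ (ιΔ (prΛΔ (z * a l))) * b l := by
    intro z; simpa using h3e z
  -- right Δ-module property of the three projections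
  have hr1 : ∀ (z : Λ) (d : Δ), prΛΓ (z * ιΓ (ιΔ d)) = prΛΓ z * ιΔ d := by
    intro z d
    have := h1b 1 (ιΔ d) z
    simpa using this
  have hr2 : ∀ (g : Γ) (d : Δ), prΓΔ (g * ιΔ d) = prΓΔ g * d := by
    intro g d
    have := h2b 1 d g
    simpa using this
  have hr3 : ∀ (z : Λ) (d : Δ), prΛΔ (z * ιΓ (ιΔ d)) = prΛΔ z * d := by
    intro z d
    have := h3b' 1 d z
    simpa using this
  -- left Γ-module property of prΛΓ
  have hl1 : ∀ (g : Γ) (z : Λ), prΛΓ (ιΓ g * z) = g * prΛΓ z := by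
    intro g z
    have := h1b g 1 z
    simpa using this
  -- left Δ-module property of prΛΔ
  have hl3 : ∀ (d : Δ) (z : Λ), prΛΔ (ιΓ (ιΔ d) * z) = d * prΛΔ z := by
    intro d z
    have := h3b' d 1 z
    simpa using this
  -- compatibility of the composed projection with s
  have hs0 : ∀ z : Λ, s (ιΓ (ιΔ (prΓΔ (prΛΓ z)))) = s z := by
    intro z
    have h := h2c (prΛΓ z)
    simp only [LinearMap.comp_apply, AlgHom.toLinearMap_apply] at h
    rw [h, h1c]
  -- the symmetrizing form on Δ, symmetric and nondegenerate
  have hsymΔ : ∀ d e : Δ, s (ιΓ (ιΔ (d * e))) = s (ιΓ (ιΔ (e * d))) := by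
    intro d e
    have := hparΔ.2.1.1 d e
    simpa using this
  have hndΔ : ∀ d : Δ, (∀ e : Δ, s (ιΓ (ιΔ (d * e))) = 0) → d = 0 := by
    intro d h
    by_contra hd
    obtain ⟨e, he⟩ := hparΔ.2.1.2 d hd
    exact he (by simpa using h e)
  -- uniqueness of the projection: prΓΔ ∘ prΛΓ = prΛΔ
  have hprEq : ∀ z : Λ, prΓΔ (prΛΓ z) = prΛΔ z := by
    intro z
    have key : ∀ e : Δ, s (ιΓ (ιΔ ((prΓΔ (prΛΓ z) - prΛΔ z) * e))) = 0 := by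
      intro e
      have e1 : prΓΔ (prΛΓ z) * e = prΓΔ (prΛΓ (z * ιΓ (ιΔ e))) := by
        rw [hr1, hr2]
      have e2 : prΛΔ z * e = prΛΔ (z * ιΓ (ιΔ e)) := (hr3 z e).symm
      rw [sub_mul, e1, e2, map_sub, map_sub, map_sub, hs0, h3c', sub_self]
    have := hndΔ _ key
    exact sub_eq_zero.mp this
  -- the composite expansion identity
  have hexp : ∀ z : Λ,
      z = ∑ i, ∑ j, x i * ιΓ (u j) * ιΓ (ιΔ (prΛΔ (ιΓ (v j) * y i * z))) := by
    intro z
    calc z = ∑ i, x i * ιΓ (prΛΓ (y i * z)) := h1d z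
      _ = ∑ i, x i * ιΓ (∑ j, u j * ιΔ (prΓΔ (v j * prΛΓ (y i * z)))) := by
          refine Finset.sum_congr rfl fun i _ => ?_
          rw [← h2d (prΛΓ (y i * z))]
      _ = ∑ i, ∑ j, x i * ιΓ (u j) * ιΓ (ιΔ (prΛΔ (ιΓ (v j) * y i * z))) := by
          refine Finset.sum_congr rfl fun i _ => ?_
          rw [map_sum, Finset.mul_sum]
          refine Finset.sum_congr rfl fun j _ => ?_
          rw [map_mul, ← mul_assoc]
          have h1 : v j * prΛΓ (y i * z) = prΛΓ (ιΓ (v j) * (y i * z)) := (hl1 _ _).symm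
          rw [h1, hprEq, mul_assoc (ιΓ (v j))]
  constructor
  · -- Δ is parabolic in Λ
    refine ⟨?_, ?_, ?_⟩
    · intro d e h
      exact hparΔ.1 (hparΓ.1 h)
    · constructor
      · intro d e
        simpa using hparΔ.2.1.1 d e
      · intro d hd
        obtain ⟨e, he⟩ := hparΔ.2.1.2 d hd
        exact ⟨e, by simpa using he⟩
    · letI : Module Δ Λ := Module.compHom Λ (ιΓ.comp ιΔ).toRingHom
      have hsmul : ∀ (d : Δ) (z : Λ), d • z = ιΓ (ιΔ d) * z := fun d z => rfl
      let σ : (Fin t₃ → Δ) →ₗ[Δ] Λ :=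
        { toFun := fun d => ∑ l, ιΓ (ιΔ (d l)) * b l
          map_add' := by
            intro d e
            simp [map_add, add_mul, Finset.sum_add_distrib]
          map_smul' := by
            intro c d
            simp only [RingHom.id_apply]
            rw [hsmul, Finset.mul_sum]
            refine Finset.sum_congr rfl fun l _ => ?_
            show ιΓ (ιΔ (c * d l)) * b l = _
            rw [map_mul, map_mul, mul_assoc] }
      let ψ : Λ →ₗ[Δ] (Fin t₃ → Δ) :=
        { toFun := fun z l => prΛΔ (z * a l)
          map_add' := by
            intro z w
            funext l
            simp [add_mul]
          map_smul' := by
            intro c z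
            funext l
            simp only [RingHom.id_apply]
            show prΛΔ (c • z * a l) = c * prΛΔ (z * a l)
            rw [hsmul, mul_assoc, hl3] }
      have hσψ : ∀ z : Λ, σ (ψ z) = z := by
        intro z
        exact (h3e' z).symm
      constructor
      · exact Module.Projective.of_split ψ σ (by ext z; exact hσψ z)
      · exact Module.Finite.of_surjective σ (fun z => ⟨ψ z, hσψ z⟩)
  · -- transitivity of relative trace maps
    intro M iM1 iM2 N iN1 iN2 f hadd hlin m
    have hlin' : ∀ (d : Δ) (m' : M), f (ιΓ (ιΔ d) • m') = ιΓ (ιΔ d) • f m' := by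
      intro d m'
      simpa using hlin d m'
    have hfsum : ∀ (n : ℕ) (g : Fin n → M), f (∑ i, g i) = ∑ i, f (g i) := by
      intro n g
      exact map_sum (AddMonoidHom.mk' f hadd) g Finset.univ
    have key : ∀ w : Λ, ∑ l, ιΓ (ιΔ (prΛΔ (w * a l))) • f (b l • m) = f (w • m) := by
      intro w
      calc ∑ l, ιΓ (ιΔ (prΛΔ (w * a l))) • f (b l • m)
          = ∑ l, f ((ιΓ (ιΔ (prΛΔ (w * a l))) * b l) • m) := by
            refine Finset.sum_congr rfl fun l _ => ?_
            rw [mul_smul, hlin']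
        _ = f ((∑ l, ιΓ (ιΔ (prΛΔ (w * a l))) * b l) • m) := by
            rw [Finset.sum_smul, hfsum]
        _ = f (w • m) := by rw [← h3e' w]
    symm
    calc ∑ l, a l • f (b l • m)
        = ∑ l, ∑ i, ∑ j,
            (x i * ιΓ (u j) * ιΓ (ιΔ (prΛΔ (ιΓ (v j) * y i * a l)))) • f (b l • m) := by
          refine Finset.sum_congr rfl fun l _ => ?_
          conv_lhs => rw [hexp (a l)]
          rw [Finset.sum_smul]
          exact Finset.sum_congr rfl fun i _ => Finset.sum_smul
      _ = ∑ i, ∑ j, ∑ l,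
            (x i * ιΓ (u j) * ιΓ (ιΔ (prΛΔ (ιΓ (v j) * y i * a l)))) • f (b l • m) := by
          rw [Finset.sum_comm]
          exact Finset.sum_congr rfl fun i _ => Finset.sum_comm
      _ = ∑ i, x i • ∑ j, ιΓ (u j) •
            ∑ l, ιΓ (ιΔ (prΛΔ (ιΓ (v j) * y i * a l))) • f (b l • m) := by
          simp only [mul_smul, Finset.smul_sum]
      _ = ∑ i, x i • ∑ j, ιΓ (u j) • f ((ιΓ (v j) * y i) • m) :=
          Finset.sum_congr rfl fun i _ => congrArg (x i • ·)
            (Finset.sum_congr rfl fun j _ => congrArg (ιΓ (u j) • ·) (key _))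
      _ = ∑ i, x i • ∑ j, ιΓ (u j) • f (ιΓ (v j) • (y i • m)) := by
          simp only [mul_smul]

end
end

section
/- Let p be a prime, n an integer with n < p², and P = P₁ × ⋯ × P_m a Sylow p-subgroup of S_n where each P_i is generated by a p-cycle and these p-cycles have disjoint supports (m = ⌊n/p⌋). Then for every x ∈ S_n, the intersection P ∩ xPx⁻¹ is a direct product of groups generated by p-cycles with pairwise disjoint supports; in particular P ∩ xPx⁻¹ = Q₁ × ⋯ × Q_m with each Q_i a subgroup of some conjugate structure compatible with the product decomposition. -/
open Equiv Equiv.Perm Finset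

set_option linter.unusedSectionVars false

section Aux1

variable {M : Type*} [Monoid M]

private lemma myNoncommProd_eq_one {ι : Type*} (s : Finset ι) (f : ι → M) (comm)
    (h : ∀ i ∈ s, f i = 1) : s.noncommProd f comm = 1 := by
  rw [Finset.noncommProd_eq_pow_card s f comm 1 h, one_pow]

private lemma myNoncommProd_single {ι : Type*} [DecidableEq ι] (s : Finset ι) (f : ι → M) (comm)
    {i : ι} (hi : i ∈ s) (h : ∀ j ∈ s, j ≠ i → f j = 1) : s.noncommProd f comm = f i := by
  rw [← Finset.noncommProd_erase_mul s hi f comm]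
  exact (congrArg (· * f i) (myNoncommProd_eq_one _ f _ (fun j hj => h j (Finset.mem_of_mem_erase hj)
      (Finset.ne_of_mem_erase hj)))).trans (one_mul _)

private lemma myNoncommProd_image {ι : Type*} [DecidableEq M] (s : Finset ι) (f : ι → M)
    (hinj : ∀ i ∈ s, ∀ j ∈ s, f i = f j → i = j) (comm comm') :
    (s.image f).noncommProd id comm' = s.noncommProd f comm := by
  classical
  induction s using Finset.cons_induction with
  | empty => simp
  | cons i s hi ih =>
      have himg : (Finset.cons i s hi).image f = insert (f i) (s.image f) := by
        rw [Finset.cons_eq_insert, Finset.image_insert]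
      have hnotmem : f i ∉ s.image f := by
        simp only [Finset.mem_image, not_exists]
        rintro j ⟨hj, hji⟩
        exact hi (hinj j (Finset.mem_cons_of_mem hj) i (Finset.mem_cons_self i s)
          hji ▸ hj)
      have hc : ((insert (f i) (s.image f) : Finset M) : Set M).Pairwise (Function.onFun Commute id) := by
        rw [← himg]; exact comm'
      have he : ((Finset.cons i s hi).image f).noncommProd id comm' =
          (insert (f i) (s.image f)).noncommProd id hc :=
        Finset.noncommProd_congr himg (fun _ _ => rfl) comm'
      rw [he,
        Finset.noncommProd_insert_of_notMem _ _ _ _ hnotmem,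
        Finset.noncommProd_cons]
      congr 1
      exact ih (fun a ha b hb => hinj a (Finset.mem_cons_of_mem ha) b (Finset.mem_cons_of_mem hb))
        (comm.mono (by intro x hx; simp only [Finset.coe_cons, Set.mem_insert_iff]; exact Or.inr hx))
        _

private lemma myNoncommProd_filter {ι : Type*} [DecidableEq M] (s : Finset ι) (f : ι → M)
    (comm comm') :
    s.noncommProd f comm = (s.filter (fun i => f i ≠ 1)).noncommProd f comm' := by
  classical
  have hsplit : s = (s.filter (fun i => f i ≠ 1)) ∪ (s.filter (fun i => ¬ f i ≠ 1)) :=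
    (Finset.filter_union_filter_not_eq _ s).symm
  have hc : ((s.filter (fun i => f i ≠ 1) ∪ s.filter (fun i => ¬ f i ≠ 1) : Finset ι) : Set ι).Pairwise
      (Function.onFun Commute f) := by
    rw [← hsplit]; exact comm
  have he : s.noncommProd f comm =
      (s.filter (fun i => f i ≠ 1) ∪ s.filter (fun i => ¬ f i ≠ 1)).noncommProd f hc :=
    Finset.noncommProd_congr hsplit (fun _ _ => rfl) comm
  rw [he,
    Finset.noncommProd_union_of_disjoint (Finset.disjoint_filter_filter_not s s _),
    myNoncommProd_eq_one (s.filter (fun i => ¬ f i ≠ 1)) f _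
      (fun i hi => not_not.mp (Finset.mem_filter.mp hi).2), mul_one]

end Aux1

section Aux2

variable {α : Type*} [Fintype α] [DecidableEq α]

private lemma myPowComm {ι : Type*} (g : ι → Equiv.Perm α)
    (hdisj : ∀ i j, i ≠ j → (g i).Disjoint (g j)) (a : ι → ℕ) (s : Finset ι) :
    (s : Set ι).Pairwise (Function.onFun Commute fun i => g i ^ a i) :=
  fun i _ j _ hij => ((hdisj i j hij).pow_disjoint_pow _ _).commute

private lemma myRepr {ι : Type*} [Fintype ι] [DecidableEq ι] (g : ι → Equiv.Perm α)
    (hdisj : ∀ i j, i ≠ j → (g i).Disjoint (g j))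
    {y : Equiv.Perm α} (hy : y ∈ Subgroup.closure (Set.range g)) :
    ∃ a : ι → ℕ,
      y = Finset.univ.noncommProd (fun i => g i ^ a i) (myPowComm g hdisj a _) := by
  induction hy using Subgroup.closure_induction with
  | mem x hx =>
      obtain ⟨i0, rfl⟩ := hx
      refine ⟨fun j => if j = i0 then 1 else 0, ?_⟩
      rw [myNoncommProd_single _ _ _ (Finset.mem_univ i0) (fun j _ hj => by simp [hj])]
      simp
  | one => exact ⟨fun _ => 0, by rw [myNoncommProd_eq_one] <;> simp⟩
  | mul u v hu hv ihu ihv =>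
      obtain ⟨a, rfl⟩ := ihu
      obtain ⟨b, rfl⟩ := ihv
      refine ⟨a + b, ?_⟩
      rw [← Finset.noncommProd_mul_distrib (fun i => g i ^ a i) (fun i => g i ^ b i)
        (myPowComm g hdisj a _) (myPowComm g hdisj b _)
        (fun i _ j _ hij => ((hdisj i j hij).pow_disjoint_pow _ _).commute)]
      exact Finset.noncommProd_congr rfl (fun i _ => by simp [Pi.mul_apply, pow_add]) _
  | inv u hu ihu =>
      obtain ⟨a, rfl⟩ := ihu
      refine ⟨fun i => a i * (orderOf (g i) - 1), ?_⟩
      refine inv_eq_of_mul_eq_one_right ?_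
      rw [← Finset.noncommProd_mul_distrib (fun i => g i ^ a i)
        (fun i => g i ^ (a i * (orderOf (g i) - 1)))
        (myPowComm g hdisj a _) (myPowComm g hdisj _ _)
        (fun i _ j _ hij => ((hdisj i j hij).pow_disjoint_pow _ _).commute)]
      refine myNoncommProd_eq_one _ _ _ (fun i _ => ?_)
      have hpos : 0 < orderOf (g i) := orderOf_pos _
      have h1 : 1 + (orderOf (g i) - 1) = orderOf (g i) := by omega
      have hexp : a i + a i * (orderOf (g i) - 1) = orderOf (g i) * a i := by
        conv_rhs => rw [← h1]
        ring
      show g i ^ a i * g i ^ (a i * (orderOf (g i) - 1)) = 1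
      rw [← pow_add, hexp, pow_mul, pow_orderOf_eq_one, one_pow]

private lemma myCycleFactors {ι : Type*} [Fintype ι] [DecidableEq ι] {p : ℕ} (hp : p.Prime)
    (g : ι → Equiv.Perm α) (hcyc : ∀ i, (g i).IsCycle ∧ (g i).support.card = p)
    (hdisj : ∀ i j, i ≠ j → (g i).Disjoint (g j)) (a : ι → ℕ) (comm) :
    (Finset.univ.noncommProd (fun i => g i ^ a i) comm).cycleFactorsFinset
      = (Finset.univ.filter (fun i => g i ^ a i ≠ 1)).image (fun i => g i ^ a i) := by
  classical
  have horder : ∀ i, orderOf (g i) = p := fun i => by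
    rw [(hcyc i).1.orderOf, (hcyc i).2]
  have hcop : ∀ i, g i ^ a i ≠ 1 → (a i).Coprime (orderOf (g i)) := by
    intro i h1
    rw [horder i, Nat.coprime_comm]
    refine (Nat.Prime.coprime_iff_not_dvd hp).mpr ?_
    intro hdvd
    exact h1 (orderOf_dvd_iff_pow_eq_one.mp (by rw [horder i]; exact hdvd))
  have hinj : ∀ i ∈ Finset.univ.filter (fun i => g i ^ a i ≠ 1),
      ∀ j ∈ Finset.univ.filter (fun i => g i ^ a i ≠ 1),
      g i ^ a i = g j ^ a j → i = j := by
    intro i _ j hj hij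
    by_contra hne
    have hd := (hdisj i j hne).pow_disjoint_pow (a i) (a j)
    rw [hij] at hd
    exact (Finset.mem_filter.mp hj).2 (Equiv.Perm.disjoint_refl_iff.mp hd)
  rw [Equiv.Perm.cycleFactorsFinset_eq_finset]
  refine ⟨?_, ?_, ?_⟩
  · intro f hf
    obtain ⟨i, hi, rfl⟩ := Finset.mem_image.mp hf
    exact (hcyc i).1.pow_iff.mpr (hcop i (Finset.mem_filter.mp hi).2)
  · intro c hc d hd hcd
    obtain ⟨i, _, rfl⟩ := Finset.mem_image.mp hc
    obtain ⟨j, _, rfl⟩ := Finset.mem_image.mp hd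
    have hne : i ≠ j := fun h => hcd (by rw [h])
    exact (hdisj i j hne).pow_disjoint_pow _ _
  · rw [myNoncommProd_image _ _ hinj (myPowComm g hdisj a _)]
    exact (myNoncommProd_filter _ _ comm (myPowComm g hdisj a _)).symm

end Aux2



/-- Let `P` be a Sylow `p`-subgroup of `S_n` (`n < p²`) generated by `m = ⌊n/p⌋` pairwise
disjoint `p`-cycles `g i`. Then for every `x ∈ S_n` the intersection `P ∩ xPx⁻¹` is again
generated by pairwise disjoint `p`-cycles, each of which lies in one of the cyclic factors
`⟨g j⟩` of `P`. -/
theorem stmt_11 (p n : ℕ) [Fact p.Prime] (h2 : n < p ^ 2)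
    (P : Sylow p (Equiv.Perm (Fin n))) (g : Fin (n / p) → Equiv.Perm (Fin n))
    (hcyc : ∀ i, (g i).IsCycle ∧ (g i).support.card = p)
    (hdisj : ∀ i j, i ≠ j → (g i).Disjoint (g j))
    (hP : (P : Subgroup (Equiv.Perm (Fin n))) = Subgroup.closure (Set.range g))
    (x : Equiv.Perm (Fin n)) :
    ∃ (t : ℕ) (_ : t ≤ n / p) (h : Fin t → Equiv.Perm (Fin n)),
      (∀ i, (h i).IsCycle ∧ (h i).support.card = p) ∧
      (∀ i j, i ≠ j → (h i).Disjoint (h j)) ∧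
      (∀ i, ∃ j, h i ∈ Subgroup.zpowers (g j)) ∧
      (P : Subgroup (Equiv.Perm (Fin n))) ⊓
          ((P : Subgroup (Equiv.Perm (Fin n))).map (MulAut.conj x).toMonoidHom) =
        Subgroup.closure (Set.range h) := by
  classical
  have hp : p.Prime := Fact.out
  set Q : Subgroup (Equiv.Perm (Fin n)) :=
    (P : Subgroup (Equiv.Perm (Fin n))).map (MulAut.conj x).toMonoidHom with hQdef
  set g' : Fin (n / p) → Equiv.Perm (Fin n) := fun i => x * g i * x⁻¹ with hg'def
  have hQ : Q = Subgroup.closure (Set.range g') := by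
    rw [hQdef, hP, MonoidHom.map_closure, ← Set.range_comp]
    congr 1
  have hcyc' : ∀ i, (g' i).IsCycle ∧ (g' i).support.card = p := fun i =>
    ⟨(hcyc i).1.conj, by rw [hg'def]; simp only [Equiv.Perm.card_support_conj]; exact (hcyc i).2⟩
  have hdisj' : ∀ i j, i ≠ j → (g' i).Disjoint (g' j) := fun i j hij =>
    (hdisj i j hij).conj x
  have horder : ∀ i, orderOf (g i) = p := fun i => by
    rw [(hcyc i).1.orderOf, (hcyc i).2]
  set T : Finset (Fin (n / p)) := Finset.univ.filter (fun i => g i ∈ Q) with hTdef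
  have htle : T.card ≤ n / p := le_trans (Finset.card_le_univ T) (by simp)
  set h : Fin T.card → Equiv.Perm (Fin n) := fun k => g ((T.orderIsoOfFin rfl k : T) : Fin (n / p))
    with hhdef
  have hidx_ne : ∀ i j : Fin T.card, i ≠ j →
      ((T.orderIsoOfFin rfl i : T) : Fin (n / p)) ≠ ((T.orderIsoOfFin rfl j : T) : Fin (n / p)) :=
    fun i j hij hc => hij ((T.orderIsoOfFin rfl).injective (Subtype.ext hc))
  have hrange : Set.range h = g '' (T : Set (Fin (n / p))) := by
    ext y
    constructor
    · rintro ⟨k, rfl⟩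
      exact ⟨_, (T.orderIsoOfFin rfl k).2, rfl⟩
    · rintro ⟨i, hi, rfl⟩
      refine ⟨(T.orderIsoOfFin rfl).symm ⟨i, hi⟩, ?_⟩
      show g _ = g i
      rw [OrderIso.apply_symm_apply]
  refine ⟨T.card, htle, h, fun k => hcyc _, fun i j hij => hdisj _ _ (hidx_ne i j hij),
    fun i => ⟨_, Subgroup.mem_zpowers _⟩, ?_⟩
  rw [hrange]
  apply le_antisymm
  · -- hard direction
    intro y hy
    obtain ⟨hyP, hyQ⟩ := hy
    obtain ⟨a, rfl⟩ := myRepr g hdisj (hP ▸ hyP)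
    apply Subgroup.noncommProd_mem
    intro i _
    by_cases h1 : g i ^ a i = 1
    · rw [h1]; exact one_mem _
    -- the cycle factor g i ^ a i belongs to Q
    have hfac : g i ^ a i ∈
        (Finset.univ.noncommProd (fun i => g i ^ a i)
          (myPowComm g hdisj a _)).cycleFactorsFinset := by
      rw [myCycleFactors hp g hcyc hdisj a]
      exact Finset.mem_image.mpr ⟨i, Finset.mem_filter.mpr ⟨Finset.mem_univ i, h1⟩, rfl⟩
    obtain ⟨b, hb⟩ := myRepr g' hdisj' (hQ ▸ hyQ)
    have hsubQ : (Finset.univ.noncommProd (fun i => g i ^ a i)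
        (myPowComm g hdisj a _)).cycleFactorsFinset ⊆ Finset.univ.image (fun j => g' j ^ b j) := by
      rw [hb, myCycleFactors hp g' hcyc' hdisj' b]
      exact Finset.image_subset_image (Finset.filter_subset _ _)
    have hcQ : g i ^ a i ∈ Q := by
      obtain ⟨j, _, hj⟩ := Finset.mem_image.mp (hsubQ hfac)
      rw [← hj]
      exact pow_mem (hQ ▸ Subgroup.subset_closure ⟨j, rfl⟩) _
    -- recover g i ∈ Q
    have hnd : ¬ p ∣ a i := fun hdvd =>
      h1 (orderOf_dvd_iff_pow_eq_one.mp (by rw [horder i]; exact hdvd))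
    have hcop : (a i).Coprime (orderOf (g i)) := by
      rw [horder i, Nat.coprime_comm]
      exact (Nat.Prime.coprime_iff_not_dvd hp).mpr hnd
    obtain ⟨k, hk⟩ := exists_pow_eq_self_of_coprime hcop
    have hgi : g i ∈ Q := hk ▸ pow_mem hcQ k
    have hiT : i ∈ T := Finset.mem_filter.mpr ⟨Finset.mem_univ i, hgi⟩
    exact pow_mem (Subgroup.subset_closure (Set.mem_image_of_mem g (Finset.mem_coe.mpr hiT))) _
  · rw [Subgroup.closure_le]
    rintro y ⟨i, hiT, rfl⟩
    exact Subgroup.mem_inf.mpr ⟨hP ▸ Subgroup.subset_closure ⟨i, rfl⟩,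
      (Finset.mem_filter.mp hiT).2⟩
end
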